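/- Let p > 3, a, b ∈ F_{q^2}^* with b = v/a^2 for v ∈ F_q^* satisfying v^2 − a^{q+1}v − a^{3q+3} = 0. Let η ∈ F_{q^2} with η^2 = −3a^{2q+2} − 4v, set δ = η/a and Z = (a^q + δ)/(2b). If η ∉ F_q (equivalently η^q = −η and η ≠ 0), then Z^{q+1} = 1, i.e., Z ∈ μ_{q+1}. -/

import Mathlib

/-- With `b = v/a^2`, `v^2 - a^{q+1}v - a^{3q+3} = 0`, `η^2 = -3a^{2q+2} - 4v`,
`η ∉ F_q` (i.e. `η^q = -η`, `η ≠ 0`), the root `Z = (a^q + η/a)/(2b)` of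
`bX^2 - a^qX - a^{q+1} + b^{q+1}` lies in `μ_{q+1}`. -/
theorem stmt_7 (p h q : ℕ) (hp : p.Prime) (hp3 : 3 < p) (hh : 1 ≤ h) (hq : q = p ^ h)
    (F : Type*) [Field F] [Fintype F] [CharP F p]
    (hcard : Fintype.card F = q ^ 2)
    (a v b η : F) (ha : a ≠ 0) (hv : v ^ q = v) (hv0 : v ≠ 0)
    (hb : b = v / a ^ 2)
    (hrel : v ^ 2 - a ^ (q + 1) * v - a ^ (3 * q + 3) = 0)
    (hη2 : η ^ 2 = -3 * a ^ (2 * q + 2) - 4 * v)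
    (hηq : η ^ q = -η) (hη0 : η ≠ 0) :
    ((a ^ q + η / a) / (2 * b)) ^ (q + 1) = 1 := by
  haveI := Fact.mk hp
  subst hb
  have h2 : (2:F) ≠ 0 := by
    intro h2
    have hd := (CharP.cast_eq_zero_iff F p 2).mp (by exact_mod_cast h2)
    have := Nat.le_of_dvd (by norm_num) hd
    omega
  have frob_add : ∀ x y : F, (x + y) ^ q = x ^ q + y ^ q := by
    intro x y
    subst hq
    exact add_pow_char_pow (p := p) (n := h) x y
  have haq0 : a ^ q ≠ 0 := pow_ne_zero _ ha
  have haQ : (a ^ q) ^ q = a := by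
    rw [← pow_mul, ← sq, ← hcard, FiniteField.pow_card]
  have h2q : (2:F) ^ q = 2 := by
    have := frob_add 1 1; norm_num at this; exact this
  have hnum : (a ^ q + η / a) ^ q = a - η / a ^ q := by
    rw [frob_add, div_pow, hηq, haQ, neg_div, ← sub_eq_add_neg]
  have hden : (2 * (v / a ^ 2)) ^ q = 2 * (v / a ^ (2 * q)) := by
    rw [mul_pow, h2q, div_pow, hv, ← pow_mul]
  have key : ((a ^ q + η / a) / (2 * (v / a ^ 2))) ^ (q + 1) =
      (a - η / a ^ q) * (a ^ q + η / a) / ((2 * (v / a ^ (2 * q))) * (2 * (v / a ^ 2))) := by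
    rw [pow_succ, div_pow, hnum, hden, div_mul_div_comm]
  rw [key]
  have haq1 : a ^ (2 * q) ≠ 0 := pow_ne_zero _ ha
  field_simp
  linear_combination (-4*a^q)*hrel + (-(a*a^(2*q)))*hη2
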